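/- The Δ-profile of any subspace W ⊆ F_q^n is a weakly decreasing sequence: if μ_j := dim(W + ΔW + ⋯ + Δ^{j-1}W) − dim(W + ΔW + ⋯ + Δ^{j-2}W) for j ≥ 1 (with the empty sum having dimension 0), then μ₁ ≥ μ₂ ≥ μ₃ ≥ ⋯. -/
import Mathlib


open Finset

/-- `flagDim f W j = dim (W + f W + ⋯ + f^{j-1} W)`. -/
noncomputable def flagDim (F : Type*) [Field F] {n : ℕ}
    (f : Module.End F (Fin n → F)) (W : Submodule F (Fin n → F)) (j : ℕ) : ℕ :=
  Module.finrank F ↥(⨆ i ∈ Finset.range j, W.map (f ^ i))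

section Aux

open Module Submodule

variable {F M : Type*} [Field F] [AddCommGroup M] [Module F M] [FiniteDimensional F M]

lemma aux_sup (X A B : Submodule F M) (h : B ≤ A) :
    finrank F ↥(X ⊔ A) + finrank F ↥B ≤ finrank F ↥(X ⊔ B) + finrank F ↥A := by
  have h1 : finrank F ↥((X ⊔ B) ⊔ A) + finrank F ↥((X ⊔ B) ⊓ A)
      = finrank F ↥(X ⊔ B) + finrank F ↥A := Submodule.finrank_sup_add_finrank_inf_eq _ _
  have h2 : (X ⊔ B) ⊔ A = X ⊔ A := by
    rw [sup_assoc, sup_eq_right.2 h]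
  have h3 : B ≤ (X ⊔ B) ⊓ A := le_inf (le_sup_right) h
  have h4 : finrank F ↥B ≤ finrank F ↥((X ⊔ B) ⊓ A) := Submodule.finrank_mono h3
  rw [h2] at h1
  omega

lemma aux_map (f : M →ₗ[F] M) (A B : Submodule F M) (h : B ≤ A) :
    finrank F ↥(A.map f) + finrank F ↥B ≤ finrank F ↥A + finrank F ↥(B.map f) := by
  have rk : ∀ C : Submodule F M, finrank F ↥(C.map f)
      + finrank F ↥(LinearMap.ker (f ∘ₗ C.subtype)) = finrank F ↥C := by
    intro C
    have := LinearMap.finrank_range_add_finrank_ker (f ∘ₗ C.subtype)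
    rwa [LinearMap.range_comp, Submodule.range_subtype] at this
  have hk : ∀ C : Submodule F M, finrank F ↥(LinearMap.ker (f ∘ₗ C.subtype))
      = finrank F ↥(C ⊓ LinearMap.ker f) := by
    intro C
    have : LinearMap.ker (f ∘ₗ C.subtype) = Submodule.comap C.subtype (LinearMap.ker f) := by
      rw [LinearMap.ker_comp]
    rw [this, ← Submodule.map_comap_subtype, Submodule.finrank_map_subtype_eq]
  have hA := rk A; have hB := rk B
  rw [hk] at hA hB
  have hmono : finrank F ↥(B ⊓ LinearMap.ker f) ≤ finrank F ↥(A ⊓ LinearMap.ker f) :=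
    Submodule.finrank_mono (inf_le_inf_right _ h)
  omega

omit [FiniteDimensional F M] in
lemma flag_succ (f : Module.End F M) (W : Submodule F M) (j : ℕ) :
    (⨆ i ∈ Finset.range (j + 1), W.map (f ^ i))
      = W ⊔ (⨆ i ∈ Finset.range j, W.map (f ^ i)).map f := by
  have hone : W.map ((f : Module.End F M) ^ 0) = W := by
    rw [pow_zero, Module.End.one_eq_id, Submodule.map_id]
  have hmap : (⨆ i ∈ Finset.range j, W.map (f ^ i)).map f
      = ⨆ i ∈ Finset.range j, W.map (f ^ (i + 1)) := by
    rw [Submodule.map_iSup]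
    refine iSup_congr fun i => ?_
    rw [Submodule.map_iSup]
    refine iSup_congr fun _ => ?_
    rw [← Submodule.map_comp, ← Module.End.mul_eq_comp, ← pow_succ']
  rw [hmap]
  apply le_antisymm
  · refine iSup₂_le fun i hi => ?_
    match i with
    | 0 => rw [hone]; exact le_sup_left
    | k + 1 =>
      have hk : k ∈ Finset.range j := by simp at hi ⊢; omega
      exact le_trans (le_iSup₂ (f := fun i (_ : i ∈ Finset.range j) => W.map (f ^ (i+1))) k hk)
        le_sup_right
  · refine sup_le ?_ (iSup₂_le fun i hi => ?_)
    · exact le_trans (le_of_eq hone.symm)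
        (le_iSup₂ (f := fun i (_ : i ∈ Finset.range (j+1)) => W.map (f ^ i)) 0 (by simp))
    · have : i + 1 ∈ Finset.range (j + 1) := by simp at hi ⊢; omega
      exact le_iSup₂ (f := fun i (_ : i ∈ Finset.range (j+1)) => W.map (f ^ i)) (i+1) this

end Aux

/-- The `Δ`-profile of a subspace is weakly decreasing: with
`μ_j = dim(W + ΔW + ⋯ + Δ^{j-1}W) − dim(W + ΔW + ⋯ + Δ^{j-2}W)`, one has
`μ₁ ≥ μ₂ ≥ ⋯`. -/
theorem profile_weakly_decreasing (F : Type*) [Field F] [Fintype F] (n : ℕ)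
    (f : Module.End F (Fin n → F)) (W : Submodule F (Fin n → F)) (j : ℕ) :
    flagDim F f W (j + 2) - flagDim F f W (j + 1) ≤
      flagDim F f W (j + 1) - flagDim F f W j := by
  open Module Submodule in
  set B : Submodule F (Fin n → F) := ⨆ i ∈ Finset.range j, W.map (f ^ i) with hB
  set A : Submodule F (Fin n → F) := ⨆ i ∈ Finset.range (j + 1), W.map (f ^ i) with hA
  have hBA : B ≤ A := by
    refine iSup₂_le fun i hi => ?_
    have : i ∈ Finset.range (j + 1) := by simp at hi ⊢; omega
    exact le_iSup₂ (f := fun i (_ : i ∈ Finset.range (j+1)) => W.map (f ^ i)) i this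
  have e1 : flagDim F f W (j + 1) = finrank F ↥A := rfl
  have e0 : flagDim F f W j = finrank F ↥B := rfl
  have e2 : flagDim F f W (j + 2) = finrank F ↥(W ⊔ A.map f) := by
    unfold flagDim
    rw [flag_succ f W (j + 1)]
  have e1' : flagDim F f W (j + 1) = finrank F ↥(W ⊔ B.map f) := by
    unfold flagDim
    rw [flag_succ f W j]
  have i1 := aux_sup W (A.map f) (B.map f) (Submodule.map_mono hBA)
  have i2 := aux_map (f : (Fin n → F) →ₗ[F] (Fin n → F)) A B hBA
  have i3 : finrank F ↥B ≤ finrank F ↥A := Submodule.finrank_mono hBA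
  have e3 : finrank F ↥(W ⊔ B.map f) = finrank F ↥A := e1'.symm.trans e1
  rw [e2, e1', e0]
  omega
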